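/- arXiv:0910.2856 — 2 statements merged into one kernel-verified Lean document; each statement's English description precedes it below -/
import Mathlib

section
/- Let (X, μ) be a σ-finite measure space, let A, B be measurable sets with μ(A) = μ(B) < ∞, and fix an integer i ≥ 0. For an invertible μ-preserving transformation S of X, let A_0(S), A_1(S), … be the sets defined recursively by A_0(S) = A ∩ B and A_j(S) = (A \ ⋃_{k<j} A_k(S)) ∩ S^{-j}(B \ ⋃_{k<j} S^k A_k(S)). If S, S_1, S_2, … are invertible μ-preserving transformations with S_n → S weakly (that is, μ(S_n C ∩ D) → μ(S C ∩ D) for all measurable sets C, D of finite measure), then μ(A_0(S_n) ⊔ ⋯ ⊔ A_i(S_n)) → μ(A_0(S) ⊔ ⋯ ⊔ A_i(S)) as n → ∞. -/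
open MeasureTheory Set Filter

/-- The sets `A_i(S)` of the filling scheme: `A_0 = A ∩ B` and, for `i > 0`,
`A_i = (A \ ⋃_{j<i} A_j) ∩ S^{-i}(B \ ⋃_{j<i} S^j A_j)`. -/
def fillingSet {X : Type*} (S : X → X) (A B : Set X) : ℕ → Set X
  | 0 => A ∩ B
  | i + 1 =>
      (A \ ⋃ j : Fin (i + 1), fillingSet S A B j) ∩
        S^[i + 1] ⁻¹' (B \ ⋃ j : Fin (i + 1), S^[(j : ℕ)] '' fillingSet S A B j)

open scoped symmDiff

section Aux

variable {X : Type*} [MeasurableSpace X] {μ : MeasureTheory.Measure X}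

lemma FS.measure_symmDiff_triangle (μ : MeasureTheory.Measure X) (a b c : Set X) :
    μ (a ∆ c) ≤ μ (a ∆ b) + μ (b ∆ c) :=
  le_trans (measure_mono (symmDiff_triangle a b c)) (measure_union_le _ _)

lemma FS.measure_diff_inter (μ : MeasureTheory.Measure X) {s t : Set X}
    (hst : MeasurableSet (s ∩ t)) (hfin : μ (s ∩ t) ≠ ⊤) :
    μ (s \ t) = μ s - μ (s ∩ t) := by
  rw [← Set.diff_self_inter]
  exact measure_diff Set.inter_subset_left hst.nullMeasurableSet hfin

lemma FS.symmDiff_inter_subset (a b c d : Set X) :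
    (a ∩ b) ∆ (c ∩ d) ⊆ (a ∆ c) ∪ (b ∆ d) := by
  intro x hx
  simp only [Set.mem_symmDiff, Set.mem_inter_iff, Set.mem_union] at hx ⊢
  tauto

lemma FS.symmDiff_diff_subset (a b c d : Set X) :
    (a \ b) ∆ (c \ d) ⊆ (a ∆ c) ∪ (b ∆ d) := by
  intro x hx
  simp only [Set.mem_symmDiff, Set.mem_diff, Set.mem_union] at hx ⊢
  tauto

lemma FS.symmDiff_iUnion_subset {ι : Sort*} (s t : ι → Set X) :
    (⋃ i, s i) ∆ (⋃ i, t i) ⊆ ⋃ i, (s i) ∆ (t i) := by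
  intro x hx
  simp only [Set.mem_symmDiff, Set.mem_iUnion] at hx ⊢
  rcases hx with ⟨⟨i, hi⟩, h⟩ | ⟨⟨i, hi⟩, h⟩
  · push_neg at h; exact ⟨i, Or.inl ⟨hi, h i⟩⟩
  · push_neg at h; exact ⟨i, Or.inr ⟨hi, h i⟩⟩

lemma FS.symmDiff_biUnion_subset {ι : Type*} (F : Finset ι) (s t : ι → Set X) :
    (⋃ i ∈ F, s i) ∆ (⋃ i ∈ F, t i) ⊆ ⋃ i ∈ F, (s i) ∆ (t i) :=
  (FS.symmDiff_iUnion_subset _ _).trans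
    (Set.iUnion_mono fun _ => FS.symmDiff_iUnion_subset _ _)

lemma FS.preimage_iterate_eq_image (T : X ≃ᵐ X) (k : ℕ) (C : Set X) :
    (⇑T)^[k] ⁻¹' C = (⇑T.symm)^[k] '' C := by
  induction k with
  | zero => simp
  | succ k ih =>
    rw [Function.iterate_succ, Set.preimage_comp, ih, Function.iterate_succ',
      Set.image_comp, MeasurableEquiv.image_eq_preimage_symm, MeasurableEquiv.symm_symm]

lemma FS.measurableSet_image_iterate (T : X ≃ᵐ X) (k : ℕ) {C : Set X}
    (hC : MeasurableSet C) : MeasurableSet ((⇑T)^[k] '' C) := by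
  have h := FS.preimage_iterate_eq_image T.symm k C
  rw [MeasurableEquiv.symm_symm] at h
  rw [← h]
  exact (T.symm.measurable.iterate k) hC

lemma FS.measure_image_iterate (T : X ≃ᵐ X) (hT : MeasurePreserving T μ μ) (k : ℕ)
    {C : Set X} (hC : MeasurableSet C) : μ ((⇑T)^[k] '' C) = μ C := by
  have h := FS.preimage_iterate_eq_image T.symm k C
  rw [MeasurableEquiv.symm_symm] at h
  rw [← h]
  exact ((hT.symm T).iterate k).measure_preimage hC.nullMeasurableSet

lemma FS.measure_image_equiv (T : X ≃ᵐ X) (hT : MeasurePreserving T μ μ)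
    {C : Set X} (hC : MeasurableSet C) : μ (⇑T '' C) = μ C := by
  simpa using FS.measure_image_iterate T hT 1 hC

lemma FS.measurableSet_fillingSet (T : X ≃ᵐ X) {A B : Set X} (hA : MeasurableSet A)
    (hB : MeasurableSet B) (j : ℕ) : MeasurableSet (fillingSet (⇑T) A B j) := by
  induction j using Nat.strong_induction_on with
  | _ j ih =>
    cases j with
    | zero => simp only [fillingSet]; exact hA.inter hB
    | succ i =>
      simp only [fillingSet]
      refine (hA.diff (MeasurableSet.iUnion fun (k : Fin (i + 1)) => ih k.1 k.isLt)).inter ?_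
      exact (T.measurable.iterate (i + 1))
        (hB.diff (MeasurableSet.iUnion fun (k : Fin (i + 1)) =>
          FS.measurableSet_image_iterate T k (ih k.1 k.isLt)))

lemma FS.fillingSet_subset (S : X → X) (A B : Set X) (j : ℕ) :
    fillingSet S A B j ⊆ A := by
  cases j with
  | zero => simp only [fillingSet]; exact Set.inter_subset_left
  | succ i =>
    simp only [fillingSet]
    exact Set.inter_subset_left.trans Set.diff_subset

end Aux

section Main

variable {X : Type*} [MeasurableSpace X] {μ : MeasureTheory.Measure X}
  {S : X ≃ᵐ X} {Sn : ℕ → X ≃ᵐ X}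

/-- weak convergence gives convergence of images in the symmetric-difference pseudometric. -/
lemma FS.tendsto_image_symmDiff
    (hS : MeasurePreserving S μ μ) (hSn : ∀ n, MeasurePreserving (Sn n) μ μ)
    (hconv : ∀ C D : Set X, MeasurableSet C → MeasurableSet D → μ C < ⊤ → μ D < ⊤ →
      Tendsto (fun n => μ ((Sn n) '' C ∩ D)) atTop (nhds (μ ((S : X → X) '' C ∩ D))))
    {C : Set X} (hC : MeasurableSet C) (hCfin : μ C < ⊤) :
    Tendsto (fun n => μ ((⇑(Sn n) '' C) ∆ (⇑S '' C))) atTop (nhds 0) := by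
  have hSC : MeasurableSet (⇑S '' C) := (MeasurableEquiv.measurableSet_image S).2 hC
  have hμSC : μ (⇑S '' C) = μ C := FS.measure_image_equiv S hS hC
  have ha : Tendsto (fun n => μ (⇑(Sn n) '' C ∩ ⇑S '' C)) atTop (nhds (μ C)) := by
    have h := hconv C (⇑S '' C) hC hSC hCfin (by rw [hμSC]; exact hCfin)
    rwa [Set.inter_self, hμSC] at h
  have key : ∀ n, μ ((⇑(Sn n) '' C) ∆ (⇑S '' C)) =
      (μ C - μ (⇑(Sn n) '' C ∩ ⇑S '' C)) + (μ C - μ (⇑(Sn n) '' C ∩ ⇑S '' C)) := by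
    intro n
    have h1 : MeasurableSet (⇑(Sn n) '' C) := (MeasurableEquiv.measurableSet_image _).2 hC
    have hμ1 : μ (⇑(Sn n) '' C) = μ C := FS.measure_image_equiv _ (hSn n) hC
    have hfin : μ (⇑(Sn n) '' C ∩ ⇑S '' C) ≠ ⊤ :=
      (lt_of_le_of_lt (le_trans (measure_mono Set.inter_subset_left) hμ1.le) hCfin).ne
    rw [Set.symmDiff_def, measure_union disjoint_sdiff_sdiff (hSC.diff h1)]
    congr 1
    · rw [FS.measure_diff_inter μ (h1.inter hSC) hfin, hμ1]
    · have hfin' : μ (⇑S '' C ∩ ⇑(Sn n) '' C) ≠ ⊤ := by rwa [Set.inter_comm]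
      rw [FS.measure_diff_inter μ (hSC.inter h1) hfin', hμSC,
        Set.inter_comm (⇑S '' C) (⇑(Sn n) '' C)]
  have h0 : Tendsto (fun n => μ C - μ (⇑(Sn n) '' C ∩ ⇑S '' C)) atTop (nhds 0) := by
    have := ENNReal.Tendsto.sub (tendsto_const_nhds : Tendsto (fun _ : ℕ => μ C) atTop (nhds (μ C))) ha (Or.inl hCfin.ne)
    simpa using this
  have := h0.add h0
  rw [add_zero] at this
  simpa only [key] using this

lemma FS.tendsto_image_symmDiff_symm
    (hS : MeasurePreserving S μ μ) (hSn : ∀ n, MeasurePreserving (Sn n) μ μ)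
    (hΔ : ∀ C : Set X, MeasurableSet C → μ C < ⊤ →
      Tendsto (fun n => μ ((⇑(Sn n) '' C) ∆ (⇑S '' C))) atTop (nhds 0))
    {C : Set X} (hC : MeasurableSet C) (hCfin : μ C < ⊤) :
    Tendsto (fun n => μ ((⇑(Sn n).symm '' C) ∆ (⇑S.symm '' C))) atTop (nhds 0) := by
  set D : Set X := ⇑S.symm '' C with hD
  have hDm : MeasurableSet D := (MeasurableEquiv.measurableSet_image _).2 hC
  have hDfin : μ D < ⊤ := by
    rwa [FS.measure_image_equiv S.symm (hS.symm S) hC]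
  have hSD : ⇑S '' D = C := by
    rw [hD, ← Set.image_comp]
    simp
  have key : ∀ n, μ ((⇑(Sn n).symm '' C) ∆ D) = μ ((⇑(Sn n) '' D) ∆ (⇑S '' D)) := by
    intro n
    have hmeas : MeasurableSet ((⇑(Sn n).symm '' C) ∆ D) :=
      ((MeasurableEquiv.measurableSet_image _).2 hC).symmDiff hDm
    rw [← FS.measure_image_equiv (Sn n) (hSn n) hmeas,
      Set.image_symmDiff (Sn n).injective]
    have h1 : ⇑(Sn n) '' (⇑(Sn n).symm '' C) = C := by
      rw [← Set.image_comp]; simp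
    rw [h1, hSD, symmDiff_comm]
  simpa only [key] using hΔ D hDm hDfin

lemma FS.tendsto_iterate_image_symmDiff
    (hS : MeasurePreserving S μ μ) (hSn : ∀ n, MeasurePreserving (Sn n) μ μ)
    (hΔ : ∀ C : Set X, MeasurableSet C → μ C < ⊤ →
      Tendsto (fun n => μ ((⇑(Sn n) '' C) ∆ (⇑S '' C))) atTop (nhds 0))
    (k : ℕ) {C : Set X} (hC : MeasurableSet C) (hCfin : μ C < ⊤) :
    Tendsto (fun n => μ (((⇑(Sn n))^[k] '' C) ∆ ((⇑S)^[k] '' C))) atTop (nhds 0) := by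
  induction k with
  | zero => simpa using (tendsto_const_nhds : Tendsto (fun _ : ℕ => (0:ENNReal)) atTop (nhds 0))
  | succ k ihk =>
    set D : Set X := (⇑S)^[k] '' C with hDdef
    have hDm : MeasurableSet D := FS.measurableSet_image_iterate S k hC
    have hDfin : μ D < ⊤ := by rwa [FS.measure_image_iterate S hS k hC]
    have hbound : ∀ n, μ (((⇑(Sn n))^[k+1] '' C) ∆ ((⇑S)^[k+1] '' C)) ≤
        μ (((⇑(Sn n))^[k] '' C) ∆ D) + μ ((⇑(Sn n) '' D) ∆ (⇑S '' D)) := by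
      intro n
      have e1 : (⇑(Sn n))^[k+1] '' C = ⇑(Sn n) '' ((⇑(Sn n))^[k] '' C) := by
        rw [Function.iterate_succ', Set.image_comp]
      have e2 : (⇑S)^[k+1] '' C = ⇑S '' D := by
        rw [Function.iterate_succ', Set.image_comp]
      have e3 : μ ((⇑(Sn n) '' ((⇑(Sn n))^[k] '' C)) ∆ (⇑(Sn n) '' D)) =
          μ (((⇑(Sn n))^[k] '' C) ∆ D) := by
        rw [← Set.image_symmDiff (Sn n).injective,
          FS.measure_image_equiv (Sn n) (hSn n)
            ((FS.measurableSet_image_iterate (Sn n) k hC).symmDiff hDm)]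
      rw [e1, e2, ← e3]
      exact FS.measure_symmDiff_triangle μ _ _ _
    have hg : Tendsto (fun n => μ (((⇑(Sn n))^[k] '' C) ∆ D) +
        μ ((⇑(Sn n) '' D) ∆ (⇑S '' D))) atTop (nhds 0) := by
      have := ihk.add (hΔ D hDm hDfin)
      simpa using this
    exact tendsto_of_tendsto_of_tendsto_of_le_of_le tendsto_const_nhds hg
      (fun n => zero_le) hbound

lemma FS.tendsto_iterate_preimage_symmDiff
    (hS : MeasurePreserving S μ μ) (hSn : ∀ n, MeasurePreserving (Sn n) μ μ)
    (hΔ : ∀ C : Set X, MeasurableSet C → μ C < ⊤ →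
      Tendsto (fun n => μ ((⇑(Sn n) '' C) ∆ (⇑S '' C))) atTop (nhds 0))
    (k : ℕ) {C : Set X} (hC : MeasurableSet C) (hCfin : μ C < ⊤) :
    Tendsto (fun n => μ (((⇑(Sn n))^[k] ⁻¹' C) ∆ ((⇑S)^[k] ⁻¹' C))) atTop (nhds 0) := by
  have h := FS.tendsto_iterate_image_symmDiff (S := S.symm) (Sn := fun n => (Sn n).symm)
    (hS.symm S) (fun n => (hSn n).symm (Sn n))
    (fun C hC hCfin => FS.tendsto_image_symmDiff_symm hS hSn hΔ hC hCfin) k hC hCfin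
  simpa only [← FS.preimage_iterate_eq_image] using h

lemma FS.tendsto_fillingSet_symmDiff {A B : Set X}
    (hA : MeasurableSet A) (hB : MeasurableSet B)
    (hAfin : μ A < ⊤) (hBfin : μ B < ⊤)
    (hS : MeasurePreserving S μ μ) (hSn : ∀ n, MeasurePreserving (Sn n) μ μ)
    (hΔ : ∀ C : Set X, MeasurableSet C → μ C < ⊤ →
      Tendsto (fun n => μ ((⇑(Sn n) '' C) ∆ (⇑S '' C))) atTop (nhds 0))
    (j : ℕ) :
    Tendsto (fun n => μ ((fillingSet (⇑(Sn n)) A B j) ∆ (fillingSet (⇑S) A B j)))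
      atTop (nhds 0) := by
  induction j using Nat.strong_induction_on with
  | _ j ih =>
    cases j with
    | zero =>
      simp only [fillingSet, symmDiff_self, bot_eq_empty, measure_empty]
      exact tendsto_const_nhds
    | succ i =>
      -- notation
      set F : ℕ → ℕ → Set X := fun n j => fillingSet (⇑(Sn n)) A B j with hF
      set G : ℕ → Set X := fun j => fillingSet (⇑S) A B j with hG
      have hFm : ∀ n j, MeasurableSet (F n j) :=
        fun n j => FS.measurableSet_fillingSet (Sn n) hA hB j
      have hGm : ∀ j, MeasurableSet (G j) := fun j => FS.measurableSet_fillingSet S hA hB j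
      have hGfin : ∀ j, μ (G j) < ⊤ :=
        fun j => lt_of_le_of_lt (measure_mono (FS.fillingSet_subset _ A B j)) hAfin
      set V : Set X := ⋃ j : Fin (i + 1), (⇑S)^[(j : ℕ)] '' G j with hV
      have hVm : MeasurableSet V :=
        MeasurableSet.iUnion fun j => FS.measurableSet_image_iterate S _ (hGm j)
      have hBVm : MeasurableSet (B \ V) := hB.diff hVm
      have hBVfin : μ (B \ V) < ⊤ :=
        lt_of_le_of_lt (measure_mono Set.diff_subset) hBfin
      -- the three convergent error terms
      have hE : ∀ j : Fin (i + 1),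
          Tendsto (fun n => μ (((⇑(Sn n))^[(j : ℕ)] '' G j) ∆ ((⇑S)^[(j : ℕ)] '' G j)))
            atTop (nhds 0) :=
        fun j => FS.tendsto_iterate_image_symmDiff hS hSn hΔ _ (hGm j) (hGfin j)
      have hP : Tendsto (fun n =>
          μ (((⇑(Sn n))^[i + 1] ⁻¹' (B \ V)) ∆ ((⇑S)^[i + 1] ⁻¹' (B \ V))))
            atTop (nhds 0) :=
        FS.tendsto_iterate_preimage_symmDiff hS hSn hΔ (i + 1) hBVm hBVfin
      have hD : ∀ j : Fin (i + 1),
          Tendsto (fun n => μ ((F n j) ∆ (G j))) atTop (nhds 0) :=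
        fun j => ih j j.2
      -- the bound
      set g : ℕ → ENNReal := fun n =>
        (∑ j : Fin (i + 1), μ ((F n j) ∆ (G j))) +
        ((∑ j : Fin (i + 1), (μ ((F n j) ∆ (G j)) +
            μ (((⇑(Sn n))^[(j : ℕ)] '' G j) ∆ ((⇑S)^[(j : ℕ)] '' G j)))) +
          μ (((⇑(Sn n))^[i + 1] ⁻¹' (B \ V)) ∆ ((⇑S)^[i + 1] ⁻¹' (B \ V)))) with hg
      have hgconv : Tendsto g atTop (nhds 0) := by
        have h1 : Tendsto (fun n => ∑ j : Fin (i + 1), μ ((F n j) ∆ (G j)))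
            atTop (nhds 0) := by
          have := tendsto_finset_sum (Finset.univ : Finset (Fin (i + 1)))
            (fun j _ => hD j)
          simpa using this
        have h2 : Tendsto (fun n => ∑ j : Fin (i + 1), (μ ((F n j) ∆ (G j)) +
            μ (((⇑(Sn n))^[(j : ℕ)] '' G j) ∆ ((⇑S)^[(j : ℕ)] '' G j))))
            atTop (nhds 0) := by
          have := tendsto_finset_sum (Finset.univ : Finset (Fin (i + 1)))
            (fun j _ => (hD j).add (hE j))
          simpa using this
        have := h1.add (h2.add hP)
        simpa only [add_zero] using this
      refine tendsto_of_tendsto_of_tendsto_of_le_of_le tendsto_const_nhds hgconv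
        (fun n => zero_le) ?_
      intro n
      -- per-n sets
      set Un : Set X := ⋃ j : Fin (i + 1), F n j with hUn
      set U : Set X := ⋃ j : Fin (i + 1), G j with hU
      set Vn : Set X := ⋃ j : Fin (i + 1), (⇑(Sn n))^[(j : ℕ)] '' F n j with hVn
      have hfilln : fillingSet (⇑(Sn n)) A B (i + 1) =
          (A \ Un) ∩ ((⇑(Sn n))^[i + 1] ⁻¹' (B \ Vn)) := by
        rw [hUn, hVn, hF]; simp only [fillingSet]
      have hfill : fillingSet (⇑S) A B (i + 1) =
          (A \ U) ∩ ((⇑S)^[i + 1] ⁻¹' (B \ V)) := by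
        rw [hU, hV, hG]; simp only [fillingSet]
      show μ ((fillingSet (⇑(Sn n)) A B (i + 1)) ∆ (fillingSet (⇑S) A B (i + 1))) ≤ g n
      rw [hfilln, hfill]
      -- step A
      have stepA : μ ((((A \ Un) ∩ ((⇑(Sn n))^[i + 1] ⁻¹' (B \ Vn)))) ∆
          (((A \ U) ∩ ((⇑S)^[i + 1] ⁻¹' (B \ V))))) ≤
          μ (Un ∆ U) + μ (((⇑(Sn n))^[i + 1] ⁻¹' (B \ Vn)) ∆
            ((⇑S)^[i + 1] ⁻¹' (B \ V))) := by
        refine le_trans (measure_mono ?_) (measure_union_le _ _)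
        refine (FS.symmDiff_inter_subset _ _ _ _).trans ?_
        refine Set.union_subset_union ?_ subset_rfl
        refine (FS.symmDiff_diff_subset _ _ _ _).trans ?_
        simp
      -- bound on μ (Un ∆ U)
      have stepU : μ (Un ∆ U) ≤ ∑ j : Fin (i + 1), μ ((F n j) ∆ (G j)) :=
        le_trans (measure_mono (FS.symmDiff_iUnion_subset _ _))
          (measure_iUnion_fintype_le _ _)
      -- split the preimage part
      have stepP : μ (((⇑(Sn n))^[i + 1] ⁻¹' (B \ Vn)) ∆ ((⇑S)^[i + 1] ⁻¹' (B \ V))) ≤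
          μ (Vn ∆ V) +
          μ (((⇑(Sn n))^[i + 1] ⁻¹' (B \ V)) ∆ ((⇑S)^[i + 1] ⁻¹' (B \ V))) := by
        refine le_trans (FS.measure_symmDiff_triangle μ _
          ((⇑(Sn n))^[i + 1] ⁻¹' (B \ V)) _) ?_
        refine add_le_add ?_ le_rfl
        rw [← Set.preimage_symmDiff]
        have hmeas : NullMeasurableSet ((B \ Vn) ∆ (B \ V)) μ := by
          refine MeasurableSet.nullMeasurableSet ?_
          refine MeasurableSet.symmDiff (hB.diff ?_) hBVm
          exact MeasurableSet.iUnion fun j =>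
            FS.measurableSet_image_iterate (Sn n) _ (hFm n j)
        rw [((hSn n).iterate (i + 1)).measure_preimage hmeas]
        refine measure_mono (le_trans (FS.symmDiff_diff_subset _ _ _ _) ?_)
        simp
      -- bound on μ (Vn ∆ V)
      have stepV : μ (Vn ∆ V) ≤ ∑ j : Fin (i + 1), (μ ((F n j) ∆ (G j)) +
          μ (((⇑(Sn n))^[(j : ℕ)] '' G j) ∆ ((⇑S)^[(j : ℕ)] '' G j))) := by
        refine le_trans (measure_mono (FS.symmDiff_iUnion_subset _ _)) ?_
        refine le_trans (measure_iUnion_fintype_le _ _) ?_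
        refine Finset.sum_le_sum fun j _ => ?_
        refine le_trans (FS.measure_symmDiff_triangle μ _
          ((⇑(Sn n))^[(j : ℕ)] '' G j) _) ?_
        refine add_le_add ?_ le_rfl
        rw [← Set.image_symmDiff (Function.Injective.iterate (Sn n).injective _),
          FS.measure_image_iterate (Sn n) (hSn n) _ ((hFm n j).symmDiff (hGm j))]
      calc μ ((((A \ Un) ∩ ((⇑(Sn n))^[i + 1] ⁻¹' (B \ Vn)))) ∆
          (((A \ U) ∩ ((⇑S)^[i + 1] ⁻¹' (B \ V)))))
          ≤ μ (Un ∆ U) + μ (((⇑(Sn n))^[i + 1] ⁻¹' (B \ Vn)) ∆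
            ((⇑S)^[i + 1] ⁻¹' (B \ V))) := stepA
        _ ≤ μ (Un ∆ U) + (μ (Vn ∆ V) +
            μ (((⇑(Sn n))^[i + 1] ⁻¹' (B \ V)) ∆ ((⇑S)^[i + 1] ⁻¹' (B \ V)))) :=
            add_le_add le_rfl stepP
        _ ≤ g n := by
            rw [hg]
            exact add_le_add stepU (add_le_add stepV le_rfl)

end Main

/-- Continuity of `S ↦ μ(A_0(S) ⊔ ⋯ ⊔ A_i(S))` in the weak topology: if the invertible
`μ`-preserving transformations `S_n` converge weakly to `S`, then
`μ(A_0(S_n) ⊔ ⋯ ⊔ A_i(S_n)) → μ(A_0(S) ⊔ ⋯ ⊔ A_i(S))`. -/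
theorem tendsto_measure_fillingSet_of_weak_tendsto {X : Type*} [MeasurableSpace X]
    (μ : Measure X) [SigmaFinite μ] (A B : Set X)
    (hA : MeasurableSet A) (hB : MeasurableSet B)
    (hAB : μ A = μ B) (hAfin : μ A < ⊤) (i : ℕ)
    (S : X ≃ᵐ X) (Sn : ℕ → X ≃ᵐ X)
    (hS : MeasurePreserving S μ μ) (hSn : ∀ n, MeasurePreserving (Sn n) μ μ)
    (hconv : ∀ C D : Set X, MeasurableSet C → MeasurableSet D → μ C < ⊤ → μ D < ⊤ →
      Tendsto (fun n => μ ((Sn n) '' C ∩ D)) atTop (nhds (μ ((S : X → X) '' C ∩ D)))) :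
    Tendsto (fun n => μ (⋃ j ∈ Finset.range (i + 1), fillingSet (Sn n) A B j)) atTop
      (nhds (μ (⋃ j ∈ Finset.range (i + 1), fillingSet S A B j))) := by
  have hBfin : μ B < ⊤ := hAB ▸ hAfin
  have hΔ : ∀ C : Set X, MeasurableSet C → μ C < ⊤ →
      Tendsto (fun n => μ ((⇑(Sn n) '' C) ∆ (⇑S '' C))) atTop (nhds 0) :=
    fun C hC hCfin => FS.tendsto_image_symmDiff hS hSn hconv hC hCfin
  have hkey : ∀ j : ℕ,
      Tendsto (fun n => μ ((fillingSet (⇑(Sn n)) A B j) ∆ (fillingSet (⇑S) A B j)))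
        atTop (nhds 0) :=
    FS.tendsto_fillingSet_symmDiff hA hB hAfin hBfin hS hSn hΔ
  set U : Set X := ⋃ j ∈ Finset.range (i + 1), fillingSet (⇑S) A B j with hU
  have hUfin : μ U ≠ ⊤ := by
    refine (lt_of_le_of_lt (measure_mono ?_) hAfin).ne
    exact Set.iUnion₂_subset fun j _ => FS.fillingSet_subset _ A B j
  -- symmetric difference of the unions tends to zero
  have hΔU : Tendsto (fun n =>
      μ ((⋃ j ∈ Finset.range (i + 1), fillingSet (⇑(Sn n)) A B j) ∆ U)) atTop (nhds 0) := by
    have hbound : ∀ n, μ ((⋃ j ∈ Finset.range (i + 1), fillingSet (⇑(Sn n)) A B j) ∆ U) ≤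
        ∑ j ∈ Finset.range (i + 1),
          μ ((fillingSet (⇑(Sn n)) A B j) ∆ (fillingSet (⇑S) A B j)) := by
      intro n
      refine le_trans (measure_mono (FS.symmDiff_biUnion_subset _ _ _)) ?_
      exact measure_biUnion_finset_le _ _
    have hsum : Tendsto (fun n => ∑ j ∈ Finset.range (i + 1),
        μ ((fillingSet (⇑(Sn n)) A B j) ∆ (fillingSet (⇑S) A B j))) atTop (nhds 0) := by
      have := tendsto_finset_sum (Finset.range (i + 1)) (fun j _ => hkey j)
      simpa using this
    exact tendsto_of_tendsto_of_tendsto_of_le_of_le tendsto_const_nhds hsum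
      (fun n => zero_le) hbound
  -- conclude
  have hlb : ∀ n, μ U - μ ((⋃ j ∈ Finset.range (i + 1), fillingSet (⇑(Sn n)) A B j) ∆ U) ≤
      μ (⋃ j ∈ Finset.range (i + 1), fillingSet (⇑(Sn n)) A B j) := by
    intro n
    rw [tsub_le_iff_right]
    refine le_trans (measure_mono ?_) (measure_union_le _ _)
    intro x hx
    by_cases h : x ∈ ⋃ j ∈ Finset.range (i + 1), fillingSet (⇑(Sn n)) A B j
    · exact Or.inl h
    · exact Or.inr (Set.mem_symmDiff.2 (Or.inr ⟨hx, h⟩))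
  have hub : ∀ n, μ (⋃ j ∈ Finset.range (i + 1), fillingSet (⇑(Sn n)) A B j) ≤
      μ U + μ ((⋃ j ∈ Finset.range (i + 1), fillingSet (⇑(Sn n)) A B j) ∆ U) := by
    intro n
    refine le_trans (measure_mono ?_) (measure_union_le _ _)
    intro x hx
    by_cases h : x ∈ U
    · exact Or.inl h
    · exact Or.inr (Set.mem_symmDiff.2 (Or.inl ⟨hx, h⟩))
  have hlbt : Tendsto (fun n => μ U -
      μ ((⋃ j ∈ Finset.range (i + 1), fillingSet (⇑(Sn n)) A B j) ∆ U)) atTop (nhds (μ U)) := by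
    have := ENNReal.Tendsto.sub (tendsto_const_nhds : Tendsto (fun _ : ℕ => μ U) atTop (nhds (μ U))) hΔU (Or.inl hUfin)
    simpa using this
  have hubt : Tendsto (fun n => μ U +
      μ ((⋃ j ∈ Finset.range (i + 1), fillingSet (⇑(Sn n)) A B j) ∆ U)) atTop (nhds (μ U)) := by
    have := (tendsto_const_nhds : Tendsto (fun _ : ℕ => μ U) atTop (nhds (μ U))).add hΔU
    simpa using this
  exact tendsto_of_tendsto_of_tendsto_of_le_of_le hlbt hubt hlb hub
end

section
/- Let S be an invertible μ-preserving transformation of a σ-finite measure space (X, μ). Suppose there is a sequence (ξ_n)_{n≥1} where each ξ_n is a finite collection of pairwise disjoint measurable sets of finite positive measure (the atoms of ξ_n), satisfying: (a) for every measurable set C with μ(C) < ∞ there exist sets H_n, each a union of some atoms of ξ_n, with μ(C △ H_n) → 0 as n → ∞; and (b) for every n and every pair of atoms Δ_1, Δ_2 ∈ ξ_n there exist a measurable set A ⊆ Δ_1 with μ(A) > μ(Δ_1)/2 and a μ-preserving one-to-one measurable map γ : A → Δ_2 such that for every x ∈ A one has γx ∈ { S^i x : i ∈ ℤ }. Then S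 is ergodic. -/
open MeasureTheory Set Filter

private lemma quarter_add_quarter (x : ENNReal) : x / 4 + x / 4 = x / 2 := by
  rw [ENNReal.div_add_div_same, ← two_mul, show (4 : ENNReal) = 2 * 2 by norm_num,
    ENNReal.mul_div_mul_left _ _ two_ne_zero ENNReal.ofNat_ne_top]

private lemma key_half {X : Type*} [MeasurableSpace X] (μ : Measure X) (E : Set X)
    (hE : MeasurableSet E) (Δ₁ Δ₂ : Set X) (hΔ₂m : MeasurableSet Δ₂)
    (A : Set X) (γ : X → X) (hAs : A ⊆ Δ₁) (hApos : μ Δ₁ / 2 < μ A)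
    (hmt : MapsTo γ A Δ₂)
    (hpres : ∀ D : Set X, D ⊆ Δ₂ → MeasurableSet D → μ (A ∩ γ ⁻¹' D) = μ D)
    (hinvE : ∀ x ∈ A, x ∈ E → γ x ∈ E) :
    μ Δ₁ / 2 < μ (Δ₂ ∩ E) + μ (Δ₁ \ E) := by
  have h1 : μ (A ∩ E) ≤ μ (Δ₂ ∩ E) := by
    rw [← hpres (Δ₂ ∩ E) inter_subset_left (hΔ₂m.inter hE)]
    exact measure_mono fun x hx => ⟨hx.1, hmt hx.1, hinvE x hx.1 hx.2⟩
  have h2 : μ (A \ E) ≤ μ (Δ₁ \ E) := measure_mono (diff_subset_diff_left hAs)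
  calc μ Δ₁ / 2 < μ A := hApos
    _ ≤ μ (A ∩ E) + μ (A \ E) := measure_le_inter_add_diff μ A E
    _ ≤ μ (Δ₂ ∩ E) + μ (Δ₁ \ E) := add_le_add h1 h2

/-- Ergodicity criterion: let `S` be an invertible `μ`-preserving transformation and let
`(ξ n)` be a sequence of finite collections of pairwise disjoint measurable sets of
finite positive measure such that (a) every set of finite measure is approximated by
unions of atoms of `ξ n`, and (b) for every `n` and atoms `Δ₁, Δ₂ ∈ ξ n` there are a
measurable `A ⊆ Δ₁` with `μ A > μ Δ₁ / 2` and a one-to-one measurable `μ`-preserving map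
`γ : A → Δ₂` moving each point along its `S`-orbit. Then `S` is ergodic. -/
theorem ergodic_of_approximating_partitions {X : Type*} [MeasurableSpace X]
    (μ : Measure X) [SigmaFinite μ] (S : Equiv.Perm X)
    (hSmeas : Measurable S) (hSsymm : Measurable S.symm)
    (hSmp : MeasurePreserving S μ μ)
    (ξ : ℕ → Finset (Set X))
    (hmeas : ∀ n, ∀ Δ ∈ ξ n, MeasurableSet Δ)
    (hpos : ∀ n, ∀ Δ ∈ ξ n, 0 < μ Δ)
    (hfin : ∀ n, ∀ Δ ∈ ξ n, μ Δ < ⊤)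
    (hdisj : ∀ n, ∀ Δ₁ ∈ ξ n, ∀ Δ₂ ∈ ξ n, Δ₁ ≠ Δ₂ → Disjoint Δ₁ Δ₂)
    (happrox : ∀ C : Set X, MeasurableSet C → μ C < ⊤ →
      ∃ σ : ℕ → Finset (Set X), (∀ n, σ n ⊆ ξ n) ∧
        Tendsto (fun n => μ (symmDiff C (⋃₀ (σ n : Set (Set X))))) atTop (nhds 0))
    (horbit : ∀ n, ∀ Δ₁ ∈ ξ n, ∀ Δ₂ ∈ ξ n,
      ∃ (A : Set X) (γ : X → X), A ⊆ Δ₁ ∧ MeasurableSet A ∧ μ Δ₁ / 2 < μ A ∧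
        MapsTo γ A Δ₂ ∧ InjOn γ A ∧ Measurable (A.restrict γ) ∧
        (∀ D : Set X, D ⊆ Δ₂ → MeasurableSet D → μ (A ∩ γ ⁻¹' D) = μ D) ∧
        ∀ x ∈ A, ∃ i : ℤ, γ x = (S ^ i) x) :
    Ergodic S μ := by
  refine ⟨hSmp, ⟨fun E hE hEinv => ?_⟩⟩
  rw [Filter.eventuallyConst_set']
  by_contra hcon
  rw [not_or] at hcon
  obtain ⟨hne, hnu⟩ := hcon
  have hE0 : μ E ≠ 0 := by
    intro h; exact hne (ae_eq_empty.mpr h)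
  have hEc0 : μ Eᶜ ≠ 0 := by
    intro h; exact hnu (ae_eq_univ.mpr h)
  -- invariance along all powers of S
  have hstep : ∀ x, S x ∈ E ↔ x ∈ E := fun x => Set.ext_iff.mp hEinv x
  have hZ : ∀ (i : ℤ) (x : X), (S ^ i) x ∈ E ↔ x ∈ E := by
    intro i
    induction i using Int.induction_on with
    | zero => simp
    | succ i ih =>
      intro x
      rw [zpow_add_one, Equiv.Perm.mul_apply]
      exact (ih (S x)).trans (hstep x)
    | pred i ih =>
      intro x
      rw [zpow_sub_one, Equiv.Perm.mul_apply]
      refine (ih (S⁻¹ x)).trans ?_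
      have := hstep (S⁻¹ x)
      rw [← Equiv.Perm.mul_apply, mul_inv_cancel, Equiv.Perm.one_apply] at this
      exact this.symm
  -- good atoms
  have good : ∀ F : Set X, MeasurableSet F → μ F ≠ 0 →
      ∀ᶠ n in atTop, ∃ Δ ∈ ξ n, μ (Δ \ F) < μ Δ / 4 := by
    intro F hF hF0
    obtain ⟨C, hCm, hCF, hCpos, hCfin⟩ :=
      MeasureTheory.Measure.exists_subset_measure_lt_top hF (pos_iff_ne_zero.mpr hF0)
    obtain ⟨σ, hσsub, hσtend⟩ := happrox C hCm hCfin
    have hc5 : (0 : ENNReal) < μ C / 5 := ENNReal.div_pos hCpos.ne' (by norm_num)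
    filter_upwards [hσtend.eventually_lt_const hc5] with n hn
    by_contra hbad
    push_neg at hbad
    set H : Set X := ⋃₀ (σ n : Set (Set X)) with hHdef
    have hHb : H = ⋃ Δ ∈ σ n, Δ := by
      rw [hHdef, Set.sUnion_eq_biUnion]; rfl
    have hsm : ∀ Δ ∈ σ n, MeasurableSet Δ := fun Δ h => hmeas n Δ (hσsub n h)
    have hd : ((σ n : Set (Set X))).PairwiseDisjoint id := fun a ha b hb hab =>
      hdisj n a (hσsub n ha) b (hσsub n hb) hab
    have hH : μ H = ∑ Δ ∈ σ n, μ Δ := by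
      rw [hHb]; exact measure_biUnion_finset hd hsm
    have hHFb : H \ F = ⋃ Δ ∈ σ n, (Δ \ F) := by
      rw [hHb]; simp [Set.iUnion_diff]
    have hHF : μ (H \ F) = ∑ Δ ∈ σ n, μ (Δ \ F) := by
      rw [hHFb]
      exact measure_biUnion_finset
        (fun a ha b hb hab => (hd ha hb hab).mono diff_subset diff_subset)
        (fun Δ h => (hsm Δ h).diff hF)
    have hμHle : μ H ≤ 4 * μ (H \ F) := by
      rw [hH, hHF, Finset.mul_sum]
      refine Finset.sum_le_sum fun Δ hΔ => ?_
      have h4 := hbad Δ (hσsub n hΔ)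
      rw [ENNReal.div_le_iff_le_mul (Or.inl (by norm_num)) (Or.inl (by norm_num))] at h4
      rwa [mul_comm] at h4
    have e3 : μ (H \ F) ≤ μ (symmDiff C H) :=
      measure_mono fun x hx => Set.mem_symmDiff.mpr
        (Or.inr ⟨hx.1, fun hc => hx.2 (hCF hc)⟩)
    have e4 : μ (C \ H) ≤ μ (symmDiff C H) :=
      measure_mono fun x hx => Set.mem_symmDiff.mpr (Or.inl hx)
    have hchain : μ C ≤ 5 * μ (symmDiff C H) := by
      calc μ C ≤ μ (C ∩ H) + μ (C \ H) := measure_le_inter_add_diff μ C H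
        _ ≤ μ H + μ (symmDiff C H) :=
            add_le_add (measure_mono inter_subset_right) e4
        _ ≤ 4 * μ (H \ F) + μ (symmDiff C H) := add_le_add_left hμHle _
        _ ≤ 4 * μ (symmDiff C H) + μ (symmDiff C H) :=
            add_le_add_left (mul_le_mul_right e3 4) _
        _ = 5 * μ (symmDiff C H) := by ring
    have hlt : 5 * μ (symmDiff C H) < μ C := by
      have := (ENNReal.mul_lt_mul_iff_right (a := (5 : ENNReal)) (by norm_num)
        (by norm_num)).mpr hn
      rwa [ENNReal.mul_div_cancel (by norm_num) (by norm_num)] at this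
    exact absurd hchain (not_le.mpr hlt)
  obtain ⟨n, ⟨Δ₁, hΔ₁, ha⟩, ⟨Δ₂, hΔ₂, hb⟩⟩ :=
    ((good E hE hE0).and (good Eᶜ hE.compl hEc0)).exists
  rw [diff_compl] at hb
  -- first inequality
  obtain ⟨A, γ, hAs, hAm, hApos, hmt, hinj, hmeasγ, hpres, horb⟩ :=
    horbit n Δ₁ hΔ₁ Δ₂ hΔ₂
  have ineq1 : μ Δ₁ / 2 < μ (Δ₂ ∩ E) + μ (Δ₁ \ E) := by
    refine key_half μ E hE Δ₁ Δ₂ (hmeas n Δ₂ hΔ₂) A γ hAs hApos hmt hpres ?_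
    intro x hx hxE
    obtain ⟨i, hi⟩ := horb x hx
    rw [hi]; exact (hZ i x).mpr hxE
  -- second inequality
  obtain ⟨A', γ', hAs', hAm', hApos', hmt', hinj', hmeasγ', hpres', horb'⟩ :=
    horbit n Δ₂ hΔ₂ Δ₁ hΔ₁
  have ineq2 : μ Δ₂ / 2 < μ (Δ₁ \ E) + μ (Δ₂ ∩ E) := by
    have h := key_half μ Eᶜ hE.compl Δ₂ Δ₁ (hmeas n Δ₁ hΔ₁) A' γ' hAs' hApos' hmt' hpres' ?_
    · rwa [← diff_eq, diff_compl] at h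
    · intro x hx hxE
      obtain ⟨i, hi⟩ := horb' x hx
      rw [hi]
      intro hmem
      exact hxE ((hZ i x).mp hmem)
  rcases le_total (μ Δ₁) (μ Δ₂) with h | h
  · have hlt : μ (Δ₁ \ E) + μ (Δ₂ ∩ E) < μ Δ₂ / 2 := by
      calc μ (Δ₁ \ E) + μ (Δ₂ ∩ E) < μ Δ₂ / 4 + μ Δ₂ / 4 :=
            ENNReal.add_lt_add (lt_of_lt_of_le ha (ENNReal.div_le_div_right h 4)) hb
        _ = μ Δ₂ / 2 := quarter_add_quarter _
    exact lt_irrefl _ (ineq2.trans hlt)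
  · have hlt : μ (Δ₂ ∩ E) + μ (Δ₁ \ E) < μ Δ₁ / 2 := by
      calc μ (Δ₂ ∩ E) + μ (Δ₁ \ E) < μ Δ₁ / 4 + μ Δ₁ / 4 :=
            ENNReal.add_lt_add (lt_of_lt_of_le hb (ENNReal.div_le_div_right h 4)) ha
        _ = μ Δ₁ / 2 := quarter_add_quarter _
    exact lt_irrefl _ (ineq1.trans hlt)
end
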